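/- arXiv:2306.13343 — 6 statements merged into one kernel-verified Lean document; each statement's English description precedes it below -/
import Mathlib

section
/- For a, b > 0 and ρ ∈ (-1, 1), the function g(ρ) = (a² + 2ρab + b²)/(1 - ρ²) attains its minimum over ρ ∈ [ρ̲, ρ̄] (with -1 < ρ̲ ≤ 0 ≤ ρ̄ < 1) at ρ̂ = max{ρ̲, -a/b, -b/a}, and the minimum value equals a² + 2ρ̂ab + b² divided by 1 - ρ̂². -/
set_option maxHeartbeats 1000000 in
/-- For `a, b > 0`, the squared worst-case market price of risk
`g(ρ) = (a² + 2ρab + b²)/(1 - ρ²)` attains its minimum over `ρ ∈ [ρ̲, ρ̄]`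
(with `-1 < ρ̲ ≤ 0 ≤ ρ̄ < 1`) at `ρ̂ = max{ρ̲, -a/b, -b/a}`, and the minimum
value equals `(a² + 2ρ̂ab + b²)/(1 - ρ̂²)`. -/
theorem worst_case_correlation_minimizes (a b ρlo ρhi : ℝ)
    (ha : 0 < a) (hb : 0 < b)
    (h1 : -1 < ρlo) (h2 : ρlo ≤ 0) (h3 : 0 ≤ ρhi) (h4 : ρhi < 1) :
    (max ρlo (max (-(a/b)) (-(b/a))) ∈ Set.Icc ρlo ρhi) ∧
    IsMinOn (fun ρ : ℝ => (a^2 + 2*ρ*a*b + b^2) / (1 - ρ^2)) (Set.Icc ρlo ρhi)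
      (max ρlo (max (-(a/b)) (-(b/a)))) ∧
    (fun ρ : ℝ => (a^2 + 2*ρ*a*b + b^2) / (1 - ρ^2)) (max ρlo (max (-(a/b)) (-(b/a)))) =
      (a^2 + 2*(max ρlo (max (-(a/b)) (-(b/a))))*a*b + b^2) /
        (1 - (max ρlo (max (-(a/b)) (-(b/a))))^2) := by
  set r := max ρlo (max (-(a/b)) (-(b/a))) with hrdef
  have habd : (a/b) * b = a := div_mul_cancel₀ a hb.ne'
  have hbad : (b/a) * a = b := div_mul_cancel₀ b ha.ne'
  have hr0 : r ≤ 0 := by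
    apply max_le h2
    apply max_le
    · have : 0 ≤ a/b := by positivity
      linarith
    · have : 0 ≤ b/a := by positivity
      linarith
  have hrlo : ρlo ≤ r := le_max_left _ _
  have hr1 : -1 < r := lt_of_lt_of_le h1 hrlo
  have hmab : -(a/b) ≤ r := le_trans (le_max_left _ _) (le_max_right _ _)
  have hmba : -(b/a) ≤ r := le_trans (le_max_right _ _) (le_max_right _ _)
  have hrb : 0 ≤ r * b + a := by nlinarith [mul_le_mul_of_nonneg_right hmab hb.le]
  have hra : 0 ≤ r * a + b := by nlinarith [mul_le_mul_of_nonneg_right hmba ha.le]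
  have hdenr : 0 < 1 - r^2 := by nlinarith
  refine ⟨⟨hrlo, le_trans hr0 h3⟩, ?_, rfl⟩
  intro ρ hρ
  obtain ⟨hρl, hρu⟩ := hρ
  have hρ1 : -1 < ρ := lt_of_lt_of_le h1 hρl
  have hρ2 : ρ < 1 := lt_of_le_of_lt hρu h4
  have hden : 0 < 1 - ρ^2 := by nlinarith
  simp only [Set.mem_setOf_eq]
  rw [div_le_div_iff₀ hdenr hden]
  rcases le_or_gt r ρ with h | h
  · have h1' : 0 ≤ ρ*a + b := by nlinarith
    have h2' : 0 ≤ ρ*b + a := by nlinarith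
    nlinarith [mul_nonneg (mul_nonneg (sub_nonneg.2 h) h1') hrb,
      mul_nonneg (mul_nonneg (sub_nonneg.2 h) h2') hra]
  · -- ρ < r forces r = max (-(a/b)) (-(b/a))
    have hrm : r = max (-(a/b)) (-(b/a)) := by
      rcases max_choice ρlo (max (-(a/b)) (-(b/a))) with hc | hc
      · exfalso; rw [hrdef, hc] at h; linarith
      · rw [hrdef, hc]
    rcases max_choice (-(a/b)) (-(b/a)) with hc | hc
    · have key : r * b + a = 0 := by
        rw [hrm, hc]; linarith
      have key2 : (ρ - r) * (ρ*a + b) * (r*b + a) = 0 := by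
        rw [key]; ring
      have hneg : ρ*b + a ≤ 0 := by nlinarith
      nlinarith [key2, mul_nonneg (mul_nonneg (sub_nonneg.2 h.le) (neg_nonneg.2 hneg)) hra]
    · have key : r * a + b = 0 := by
        rw [hrm, hc]; linarith
      have key2 : (ρ - r) * (ρ*b + a) * (r*a + b) = 0 := by
        rw [key]; ring
      have hneg : ρ*a + b ≤ 0 := by nlinarith
      nlinarith [key2, mul_nonneg (mul_nonneg (sub_nonneg.2 h.le) (neg_nonneg.2 hneg)) hrb]
end

section
/- For a, b > 0 and ρ ∈ (-1,1), the quantity (a² + 2ρab + b²)/(1-ρ²) is nonincreasing in ρ on the interval (-1, max{-a/b, -b/a}] and nondecreasing on [max{-a/b, -b/a}, 1); in particular its unique minimizer on (-1,1) is ρ* = max{-a/b, -b/a} = -min{a,b}/max{a,b}. -/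
set_option maxHeartbeats 1000000 in
private lemma squared_mpr_key (a b : ℝ) (ha : 0 < a) (hb : 0 < b) (hab : a ≤ b) :
    AntitoneOn (fun ρ : ℝ => (a^2 + 2*ρ*a*b + b^2) / (1 - ρ^2))
      (Set.Ioc (-1 : ℝ) (max (-(a/b)) (-(b/a)))) ∧
    MonotoneOn (fun ρ : ℝ => (a^2 + 2*ρ*a*b + b^2) / (1 - ρ^2))
      (Set.Ico (max (-(a/b)) (-(b/a))) 1) ∧
    (∀ ρ ∈ Set.Ioo (-1 : ℝ) 1, ρ ≠ max (-(a/b)) (-(b/a)) →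
      (a^2 + 2*(max (-(a/b)) (-(b/a)))*a*b + b^2) / (1 - (max (-(a/b)) (-(b/a)))^2) <
      (a^2 + 2*ρ*a*b + b^2) / (1 - ρ^2)) ∧
    max (-(a/b)) (-(b/a)) = -(min a b / max a b) := by
  have hmax : max (-(a/b)) (-(b/a)) = -(a/b) := by
    apply max_eq_left
    have : a/b ≤ b/a := by
      rw [div_le_div_iff₀ hb ha]; nlinarith
    linarith
  have hlt1 : -(a/b) < 1 := by
    have : 0 < a/b := div_pos ha hb
    linarith
  have hge : (-1 : ℝ) ≤ -(a/b) := by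
    have : a/b ≤ 1 := by rw [div_le_one hb]; exact hab
    linarith
  have hmul : -(a/b) * b = -a := by field_simp
  rw [hmax]
  refine ⟨?_, ?_, ?_, ?_⟩
  · -- Antitone on Ioc (-1) (-(a/b))
    rintro σ ⟨hσ1, hσ2⟩ ρ ⟨hρ1, hρ2⟩ hσρ
    have hρd : 0 < 1 - ρ^2 := by nlinarith
    have hσd : 0 < 1 - σ^2 := by nlinarith
    simp only
    rw [div_le_div_iff₀ hρd hσd]
    have h1 : b*ρ + a ≤ 0 := by
      nlinarith [mul_le_mul_of_nonneg_right hρ2 hb.le, hmul]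
    have h2 : b*σ + a ≤ 0 := by
      nlinarith [mul_le_mul_of_nonneg_right hσ2 hb.le, hmul]
    have h3 : 0 ≤ a*ρ + b := by nlinarith [mul_le_mul_of_nonneg_right hρ1.le ha.le]
    have h4 : 0 ≤ a*σ + b := by nlinarith [mul_le_mul_of_nonneg_right hσ1.le ha.le]
    clear hσ2 hρ2 hmax hlt1 hge hmul
    nlinarith [mul_nonneg (sub_nonneg.2 hσρ) (neg_nonneg.2 (add_nonpos
      (mul_nonpos_of_nonneg_of_nonpos h4 h1) (mul_nonpos_of_nonneg_of_nonpos h3 h2)))]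
  · -- Monotone on Ico (-(a/b)) 1
    rintro σ ⟨hσ1, hσ2⟩ ρ ⟨hρ1, hρ2⟩ hσρ
    simp only
    by_cases hσm : σ = -1
    · -- then -(a/b) = -1, so a = b, and f σ = 0
      have hab1 : -(a/b) = -1 := le_antisymm (hσm ▸ hσ1) hge
      have haeb : a = b := by
        have : a/b = 1 := by linarith [neg_injective hab1]
        rwa [div_eq_one_iff_eq hb.ne'] at this
      subst haeb
      subst hσm
      have : a^2 + 2*(-1 : ℝ)*a*a + a^2 = 0 := by ring
      rw [this, zero_div]
      apply div_nonneg
      · nlinarith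
      · nlinarith
    · have hσ1' : -1 < σ := lt_of_le_of_ne (le_trans hge hσ1) (Ne.symm hσm)
      have hρ1' : -1 < ρ := lt_of_lt_of_le hσ1' hσρ
      have hρd : 0 < 1 - ρ^2 := by nlinarith
      have hσd : 0 < 1 - σ^2 := by nlinarith
      rw [div_le_div_iff₀ hσd hρd]
      have h1 : 0 ≤ b*ρ + a := by
        nlinarith [mul_le_mul_of_nonneg_right hρ1 hb.le, hmul]
      have h2 : 0 ≤ b*σ + a := by
        nlinarith [mul_le_mul_of_nonneg_right hσ1 hb.le, hmul]
      have h3 : 0 ≤ a*ρ + b := by nlinarith [mul_le_mul_of_nonneg_right hρ1'.le ha.le]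
      have h4 : 0 ≤ a*σ + b := by nlinarith [mul_le_mul_of_nonneg_right hσ1'.le ha.le]
      clear hσ1 hρ1 hmax hlt1 hge hmul hσm
      nlinarith [mul_nonneg (sub_nonneg.2 hσρ) (add_nonneg (mul_nonneg h4 h1) (mul_nonneg h3 h2))]
  · -- strict minimizer
    rintro ρ ⟨hρ1, hρ2⟩ hne
    have hρd : 0 < 1 - ρ^2 := by nlinarith
    rcases eq_or_lt_of_le hab with heq | hlt
    · -- a = b : ρ* = -1, value is 0/0 = 0
      subst heq
      have h1 : -(a/a) = (-1 : ℝ) := by rw [div_self (ne_of_gt ha)]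
      rw [h1]
      have hnum : a^2 + 2*(-1 : ℝ)*a*a + a^2 = 0 := by ring
      rw [hnum, zero_div]
      apply div_pos _ hρd
      nlinarith [mul_pos (mul_pos ha ha) (by linarith : (0:ℝ) < 1 + ρ)]
    · -- a < b : value at ρ* is b^2
      have hb2 : b^2 = (a^2 + 2*(-(a/b))*a*b + b^2) / (1 - (-(a/b))^2) := by
        have hd : (1 : ℝ) - (-(a/b))^2 ≠ 0 := by
          have h1 : a/b < 1 := (div_lt_one hb).mpr hlt
          have h2 : 0 < a/b := div_pos ha hb
          nlinarith
        rw [eq_div_iff hd]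
        field_simp
        ring
      rw [← hb2, lt_div_iff₀ hρd]
      have hne' : b*ρ + a ≠ 0 := by
        intro h
        apply hne
        field_simp
        linarith
      clear hne hmax hlt1 hge hmul hb2
      nlinarith [lt_of_le_of_ne (sq_nonneg (b*ρ+a)) (Ne.symm (pow_ne_zero 2 hne'))]
  · rw [min_eq_left hab, max_eq_right hab]

/-- For `a, b > 0`, the map `ρ ↦ (a² + 2ρab + b²)/(1-ρ²)` is nonincreasing on
`(-1, max{-a/b, -b/a}]` and nondecreasing on `[max{-a/b, -b/a}, 1)`; its unique
minimizer on `(-1,1)` is `ρ* = max{-a/b, -b/a} = -min{a,b}/max{a,b}`. -/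
theorem squared_mpr_monotonicity (a b : ℝ) (ha : 0 < a) (hb : 0 < b) :
    AntitoneOn (fun ρ : ℝ => (a^2 + 2*ρ*a*b + b^2) / (1 - ρ^2))
      (Set.Ioc (-1 : ℝ) (max (-(a/b)) (-(b/a)))) ∧
    MonotoneOn (fun ρ : ℝ => (a^2 + 2*ρ*a*b + b^2) / (1 - ρ^2))
      (Set.Ico (max (-(a/b)) (-(b/a))) 1) ∧
    (∀ ρ ∈ Set.Ioo (-1 : ℝ) 1, ρ ≠ max (-(a/b)) (-(b/a)) →
      (a^2 + 2*(max (-(a/b)) (-(b/a)))*a*b + b^2) / (1 - (max (-(a/b)) (-(b/a)))^2) <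
      (a^2 + 2*ρ*a*b + b^2) / (1 - ρ^2)) ∧
    max (-(a/b)) (-(b/a)) = -(min a b / max a b) := by
  rcases le_total a b with h | h
  · exact squared_mpr_key a b ha hb h
  · obtain ⟨H1, H2, H3, H4⟩ := squared_mpr_key b a hb ha h
    have hm : max (-(a/b)) (-(b/a)) = max (-(b/a)) (-(a/b)) := max_comm _ _
    have hfun : (fun ρ : ℝ => (a^2 + 2*ρ*a*b + b^2) / (1 - ρ^2))
        = (fun ρ : ℝ => (b^2 + 2*ρ*b*a + a^2) / (1 - ρ^2)) := by
      funext ρ; ring_nf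
    refine ⟨?_, ?_, ?_, ?_⟩
    · rw [hfun, hm]; exact H1
    · rw [hfun, hm]; exact H2
    · intro ρ hρ hne
      rw [hm] at hne ⊢
      convert H3 ρ hρ hne using 2 <;> ring
    · rw [hm, H4, min_comm, max_comm]
end

section
/- Let Σ be the volatility matrix with rows (-cσ_r, 0) and (σ_S ρ, σ_S√(1-ρ²)), c, σ_r, σ_S > 0, ρ ∈ (-1,1), and ν = (σ_r, 0)ᵀ. Then (Σᵀ)⁻¹ ν = (-1/c, 0)ᵀ; in particular the interest-rate-hedging portfolio -(Σᵀ)⁻¹ν b(T-t) = (b(T-t)/c, 0)ᵀ involves only the bond and is independent of σ_r, σ_S, and ρ. -/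
open Matrix

/-- With `Σ` the bond/stock volatility matrix and `ν = (σ_r, 0)ᵀ` the short-rate
diffusion, `(Σᵀ)⁻¹ ν = (-1/c, 0)ᵀ`; in particular the interest-rate-hedging
portfolio `-(Σᵀ)⁻¹ ν · b(T-t) = (b(T-t)/c, 0)ᵀ` involves only the bond and is
independent of `σ_r`, `σ_S`, and `ρ`. -/
theorem hedge_portfolio_closed_form (c σr σS ρ h : ℝ)
    (hc : 0 < c) (hσr : 0 < σr) (hσS : 0 < σS) (hρ : ρ ∈ Set.Ioo (-1 : ℝ) 1) :
    ((!![-(c*σr), 0; σS*ρ, σS*Real.sqrt (1-ρ^2)] : Matrix (Fin 2) (Fin 2) ℝ)ᵀ)⁻¹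
      *ᵥ ![σr, 0] = ![-(1/c), 0] ∧
    -(h • (((!![-(c*σr), 0; σS*ρ, σS*Real.sqrt (1-ρ^2)] : Matrix (Fin 2) (Fin 2) ℝ)ᵀ)⁻¹
      *ᵥ ![σr, 0])) = ![h/c, 0] := by
  set A := (!![-(c*σr), 0; σS*ρ, σS*Real.sqrt (1-ρ^2)] : Matrix (Fin 2) (Fin 2) ℝ)ᵀ
  have hs : 0 < Real.sqrt (1-ρ^2) := by
    apply Real.sqrt_pos.mpr
    nlinarith [hρ.1, hρ.2]
  have hdet : A.det ≠ 0 := by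
    simp only [A, det_transpose, Matrix.det_fin_two_of]
    have hpos : 0 < (c*σr) * (σS*Real.sqrt (1-ρ^2)) := by positivity
    intro hcon
    simp only [neg_mul] at hcon
    nlinarith
  have hmul : A *ᵥ ![-(1/c), 0] = ![σr, 0] := by
    simp only [A]
    funext i
    fin_cases i <;>
      simp [Matrix.mulVec, dotProduct, Fin.sum_univ_two, transpose_apply] <;>
      field_simp
  have key : A⁻¹ *ᵥ ![σr, 0] = ![-(1/c), 0] := by
    rw [← hmul, Matrix.mulVec_mulVec, Matrix.nonsing_inv_mul A (isUnit_iff_ne_zero.mpr hdet),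
      Matrix.one_mulVec]
  refine ⟨key, ?_⟩
  rw [key]
  funext i
  fin_cases i <;> simp <;> ring
end

section
/- Martingale optimality principle with multiple priors: Let u be a utility function, T > 0, and for each strategy π in an admissible set Π let 𝒫_π = {P_{π,θ} : θ ∈ Θ} be a set of priors. Suppose there is a function V with V(T,W,r) = u(W), a strategy π̂ ∈ Π, and θ̂ ∈ Θ such that (V(t,W_t,r_t))_t is a P_{π̂,θ̂}-martingale, a P_{π,θ̂}-supermartingale for every π ∈ Π, and P_{π̂,θ̂} is a worst-case prior for π̂ (i.e., inf over 𝒫_{π̂} of E[u(W_T)] is attained at P_{π̂,θ̂}). Then sup_{π∈Π} inf_{P∈𝒫_π} E_P[u(W_T)] = inf_{P∈𝒫_{π̂}} E_P[u(W_T)] = V(0, W₀, r₀). -/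
open MeasureTheory

/-- Martingale optimality principle with multiple priors (Proposition 1): for
each admissible strategy `π` in a (nonempty) set of strategies `S` and each
scenario `θ` in a (nonempty) set of scenarios `Θ'`, let `P π θ` be the induced
prior on path space `Ω` and `f = u(W_T)` the utility of terminal wealth.
Suppose there are `π̂`, `θ̂` and a value `V₀ = V(0, W₀, r₀)` such that the
martingale property of the value function under `P π̂ θ̂` gives
`E_{P π̂ θ̂}[u(W_T)] = V₀`, the supermartingale property under `P π θ̂` gives
`E_{P π θ̂}[u(W_T)] ≤ V₀` for every `π`, and `P π̂ θ̂` is a worst-case prior for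
`π̂`, i.e. `⨅ θ, E_{P π̂ θ}[u(W_T)] = E_{P π̂ θ̂}[u(W_T)]`. Then
`⨆ π, ⨅ θ, E_{P π θ}[u(W_T)] = ⨅ θ, E_{P π̂ θ}[u(W_T)] = V₀`. -/
theorem martingale_optimality_principle_multiple_priors
    {S Θ' Ω : Type*} [Nonempty S] [Nonempty Θ'] [MeasurableSpace Ω]
    (P : S → Θ' → Measure Ω) (u : ℝ → ℝ) (WT : Ω → ℝ) (V₀ : ℝ)
    (πhat : S) (θhat : Θ')
    (hbdd : ∀ π : S, BddBelow (Set.range fun θ : Θ' => ∫ ω, u (WT ω) ∂(P π θ)))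
    (hmart : ∫ ω, u (WT ω) ∂(P πhat θhat) = V₀)
    (hsupermart : ∀ π : S, ∫ ω, u (WT ω) ∂(P π θhat) ≤ V₀)
    (hworst : (⨅ θ : Θ', ∫ ω, u (WT ω) ∂(P πhat θ)) = ∫ ω, u (WT ω) ∂(P πhat θhat)) :
    (⨆ π : S, ⨅ θ : Θ', ∫ ω, u (WT ω) ∂(P π θ)) =
      (⨅ θ : Θ', ∫ ω, u (WT ω) ∂(P πhat θ)) ∧
    (⨅ θ : Θ', ∫ ω, u (WT ω) ∂(P πhat θ)) = V₀ := by
  have h2 : (⨅ θ : Θ', ∫ ω, u (WT ω) ∂(P πhat θ)) = V₀ := hworst.trans hmart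
  refine ⟨le_antisymm ?_ ?_, h2⟩
  · apply ciSup_le
    intro π
    rw [h2]
    exact (ciInf_le (hbdd π) θhat).trans (hsupermart π)
  · apply le_ciSup_of_le ?_ πhat le_rfl
    refine ⟨V₀, ?_⟩
    rintro x ⟨π, rfl⟩
    exact (ciInf_le (hbdd π) θhat).trans (hsupermart π)
end

section
/- Both speculative portfolio weights are nonnegative under the worst-case scenario: for any a, b > 0 and ρ̲ ∈ (-1,0], setting ρ̂ = max{ρ̲, -a/b, -b/a}, the quantities (a + ρ̂b)/(1-ρ̂²) and (b + ρ̂a)/(1-ρ̂²) are both ≥ 0. In particular, the ambiguity-averse investor never shorts the bond or the stock for speculative reasons. -/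
/-- Both speculative portfolio weights are nonnegative under the worst-case
scenario: for `a, b > 0` and `ρ̲ ∈ (-1,0]`, with `ρ̂ = max{ρ̲, -a/b, -b/a}`,
both `(a + ρ̂b)/(1-ρ̂²) ≥ 0` and `(b + ρ̂a)/(1-ρ̂²) ≥ 0`; the ambiguity-averse
investor never shorts the bond or the stock for speculative reasons. -/
theorem speculative_weights_nonneg (a b ρlo : ℝ)
    (ha : 0 < a) (hb : 0 < b) (hρ : ρlo ∈ Set.Ioc (-1 : ℝ) 0) :
    0 ≤ (a + max ρlo (max (-(a/b)) (-(b/a))) * b) /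
          (1 - (max ρlo (max (-(a/b)) (-(b/a))))^2) ∧
    0 ≤ (b + max ρlo (max (-(a/b)) (-(b/a))) * a) /
          (1 - (max ρlo (max (-(a/b)) (-(b/a))))^2) := by
  obtain ⟨h1, h0⟩ := hρ
  set ρ := max ρlo (max (-(a/b)) (-(b/a))) with hρdef
  have hρgt : -1 < ρ := lt_of_lt_of_le h1 (le_max_left _ _)
  have hρle : ρ ≤ 0 := by
    apply max_le h0
    apply max_le
    · simp [le_of_lt (div_pos ha hb)]
    · simp [le_of_lt (div_pos hb ha)]
  have hden : 0 < 1 - ρ^2 := by nlinarith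
  have hab : -(a/b) ≤ ρ := le_trans (le_max_left _ _) (le_max_right _ _)
  have hba : -(b/a) ≤ ρ := le_trans (le_max_right _ _) (le_max_right _ _)
  constructor
  · apply div_nonneg _ hden.le
    have : -(a/b) * b ≤ ρ * b := mul_le_mul_of_nonneg_right hab hb.le
    have h2 : -(a/b) * b = -a := by field_simp
    linarith [h2 ▸ this]
  · apply div_nonneg _ hden.le
    have : -(b/a) * a ≤ ρ * a := mul_le_mul_of_nonneg_right hba ha.le
    have h2 : -(b/a) * a = -b := by field_simp
    linarith [h2 ▸ this]
end

section
/- Monotonicity in risk aversion: with π̂^B(γ) = (1/γ)M_B + ((γ-1)/γ)H and π̂^S(γ) = (1/γ)M_S for fixed M_B, M_S ≥ 0 and H > 0 with M_S > 0, the bond-stock ratio π̂^B(γ)/π̂^S(γ) = (M_B + (γ-1)H)/M_S is strictly increasing in γ on (1, ∞). -/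
/-- Monotonicity of the bond-stock ratio in risk aversion: with
`π̂^B(γ) = (1/γ)M_B + ((γ-1)/γ)H` and `π̂^S(γ) = (1/γ)M_S` for fixed
`M_B ≥ 0`, `M_S > 0` and `H > 0`, the bond-stock ratio satisfies
`π̂^B(γ)/π̂^S(γ) = (M_B + (γ-1)H)/M_S` and is strictly increasing in `γ`
on `(1, ∞)`. -/
theorem bond_stock_ratio_strictMono (MB MS H : ℝ)
    (hMB : 0 ≤ MB) (hMS : 0 < MS) (hH : 0 < H) :
    (∀ γ ∈ Set.Ioi (1 : ℝ),
      ((1/γ) * MB + ((γ-1)/γ) * H) / ((1/γ) * MS) = (MB + (γ-1) * H) / MS) ∧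
    StrictMonoOn (fun γ : ℝ => ((1/γ) * MB + ((γ-1)/γ) * H) / ((1/γ) * MS))
      (Set.Ioi (1 : ℝ)) := by
  have key : ∀ γ ∈ Set.Ioi (1 : ℝ),
      ((1/γ) * MB + ((γ-1)/γ) * H) / ((1/γ) * MS) = (MB + (γ-1) * H) / MS := by
    intro γ hγ
    have hγ0 : γ ≠ 0 := by have : (1:ℝ) < γ := hγ; linarith
    field_simp
  refine ⟨key, ?_⟩
  intro a ha b hb hab
  simp only []
  rw [key a ha, key b hb]
  have hab' : a < b := hab
  gcongr
end
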